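/- Let F be a finite field and let α ∈ F⟦X⟧ be a power series whose coefficient sequence is eventually periodic. Then the set { shift_e(α · γ) : e ∈ ℕ, γ ∈ F[X] a polynomial of degree < e } is a finite subset of F⟦X⟧. Likewise, for any β ∈ F⟦X⟧ with eventually periodic coefficient sequence, the set { shift_e β : e ∈ ℕ } is finite. -/

import Mathlib

namespace RoverNekrashevych

/-- The shift of a power series: `(shift e σ)_i = σ_{i+e}`. -/
noncomputable def shift {F : Type*} [CommSemiring F] (e : ℕ) (σ : PowerSeries F) :
    PowerSeries F :=
  PowerSeries.mk fun i => PowerSeries.coeff (i + e) σ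

/-- The coefficient sequence of `σ` is eventually periodic. -/
def EventuallyPeriodic {F : Type*} [CommSemiring F] (σ : PowerSeries F) : Prop :=
  ∃ (N m : ℕ), 1 ≤ m ∧ ∀ n : ℕ, N ≤ n →
    PowerSeries.coeff (n + m) σ = PowerSeries.coeff n σ

lemma shift_eq_of_period {F : Type*} [CommSemiring F] {σ : PowerSeries F} {N m : ℕ}
    (h : ∀ n : ℕ, N ≤ n → PowerSeries.coeff (n + m) σ = PowerSeries.coeff n σ)
    {e : ℕ} (he : N ≤ e) : shift (e + m) σ = shift e σ := by
  apply PowerSeries.ext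
  intro i
  simp only [shift, PowerSeries.coeff_mk]
  rw [show i + (e + m) = (i + e) + m by ring]
  exact h (i + e) (by omega)

lemma shift_mem_image {F : Type*} [CommSemiring F] [DecidableEq (PowerSeries F)]
    {σ : PowerSeries F} {N m : ℕ} (hm : 1 ≤ m)
    (h : ∀ n : ℕ, N ≤ n → PowerSeries.coeff (n + m) σ = PowerSeries.coeff n σ)
    (e : ℕ) : shift e σ ∈ (Finset.range (N + m)).image (fun k => shift k σ) := by
  induction e using Nat.strong_induction_on with
  | _ e ih =>
    by_cases he : e < N + m
    · exact Finset.mem_image_of_mem _ (Finset.mem_range.mpr he)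
    · have h1 : e = (e - m) + m := by omega
      have h3 : N ≤ e - m := by omega
      have h2 : shift e σ = shift (e - m) σ := by
        conv_lhs => rw [h1]
        exact shift_eq_of_period h h3
      rw [h2]; exact ih (e - m) (by omega)

lemma shift_mul_poly {F : Type*} [CommRing F] (α : PowerSeries F) (γ : Polynomial F)
    (e : ℕ) (hγ : γ.degree < (e : ℕ)) :
    shift e (α * (γ : PowerSeries F)) =
      ∑ j ∈ Finset.range e, γ.coeff j • shift (e - j) α := by
  apply PowerSeries.ext
  intro i
  rw [map_sum]
  simp only [shift, PowerSeries.coeff_mk, PowerSeries.coeff_smul, smul_eq_mul]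
  rw [mul_comm, PowerSeries.coeff_mul,
    Finset.Nat.sum_antidiagonal_eq_sum_range_succ_mk]
  simp only [Polynomial.coeff_coe]
  rw [← Finset.sum_subset (Finset.range_subset_range.mpr (by omega : e ≤ i + e + 1))]
  · apply Finset.sum_congr rfl
    intro j hj
    rw [Finset.mem_range] at hj
    rw [show i + e - j = i + (e - j) by omega]
  · intro j _ hj
    rw [Finset.mem_range, not_lt] at hj
    rw [Polynomial.coeff_eq_zero_of_degree_lt (lt_of_lt_of_le hγ (by exact_mod_cast hj)),
      zero_mul]

/-- Let `F` be a finite field and `α ∈ F⟦X⟧` eventually periodic.  Then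
`{ shift_e (α·γ) : e ∈ ℕ, γ ∈ F[X], deg γ < e }` is finite.  Likewise, for eventually
periodic `β`, the set `{ shift_e β : e ∈ ℕ }` is finite. -/
theorem finitely_many_states_of_eventually_periodic
    {F : Type*} [Field F] [Fintype F] (α β : PowerSeries F)
    (hα : EventuallyPeriodic α) (hβ : EventuallyPeriodic β) :
    Set.Finite {δ : PowerSeries F | ∃ (e : ℕ) (γ : Polynomial F),
        γ.degree < (e : ℕ) ∧ δ = shift e (α * (γ : PowerSeries F))}
    ∧ Set.Finite {δ : PowerSeries F | ∃ e : ℕ, δ = shift e β} := by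
  classical
  obtain ⟨N, m, hm, hper⟩ := hα
  obtain ⟨N', m', hm', hper'⟩ := hβ
  constructor
  · set T : Finset (PowerSeries F) := (Finset.range (N + m)).image (fun k => shift k α)
    have hspan : Set.Finite (Submodule.span F (T : Set (PowerSeries F)) :
        Set (PowerSeries F)) := by
      haveI : FiniteDimensional F (Submodule.span F (T : Set (PowerSeries F))) :=
        FiniteDimensional.span_of_finite F (T.finite_toSet)
      haveI : Finite (Submodule.span F (T : Set (PowerSeries F))) :=
        Module.finite_of_finite F
      exact Set.toFinite _
    apply hspan.subset
    rintro δ ⟨e, γ, hγ, rfl⟩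
    rw [shift_mul_poly α γ e hγ]
    apply Submodule.sum_mem
    intro j _
    exact Submodule.smul_mem _ _ (Submodule.subset_span
      (shift_mem_image hm hper (e - j)))
  · apply Set.Finite.subset
      ((Finset.range (N' + m')).image (fun k => shift k β)).finite_toSet
    rintro δ ⟨e, rfl⟩
    exact shift_mem_image hm' hper' e

end RoverNekrashevych
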